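/- Let d > 0, γ ∈ [0, 1/d), and let λ₀ be the infimum of the Rayleigh quotient of h̃ = -d²/du² - γ²/(4(1-uγ)²) with boundary conditions ψ(0)=0, ψ'(d)+αψ(d)=0, α = γ/(2(1-dγ)). Let λ_{0,1} be the lowest eigenvalue with the same boundary conditions but zero potential, with real eigenfunction ψ₀. Then π²/(4d²) ≤ λ_{0,1} - α·ψ₀(d)²/‖ψ₀‖² ≤ λ₀ - α·ψ₀(d)²/‖ψ₀‖² + γ²/(4(1-dγ)²). -/

import Mathlib

open Real Set intervalIntegral Filter Topology
lemma alg_ineq {θ : ℝ} (hθ : π/2 ≤ θ) :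
    π^2 * (2*θ - sin (2*θ)) ≤ 4*θ^2 * (2*θ + sin (2*θ)) := by
  have hπ : 0 < π := Real.pi_pos
  rcases le_or_gt 0 (sin (2*θ)) with h | h
  · nlinarith [sq_nonneg θ, sq_nonneg (2*θ - π)]
  · have h1 : -(sin (2*θ)) = sin (2*θ - π) := by
      rw [Real.sin_sub_pi]
    have h2 : sin (2*θ - π) ≤ 2*θ - π := Real.sin_le (by linarith)
    nlinarith [sq_nonneg (2*θ - π)]
lemma hasDerivAt_sin_mul (ω u : ℝ) : HasDerivAt (fun x => sin (ω*x)) (ω * cos (ω*u)) u := by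
  have h : HasDerivAt (fun x : ℝ => ω*x) ω u := by
    simpa using (hasDerivAt_id u).const_mul ω
  simpa [mul_comm] using h.sin
lemma hasDerivAt_cos_mul (ω u : ℝ) : HasDerivAt (fun x => cos (ω*x)) (-(ω * sin (ω*u))) u := by
  have h : HasDerivAt (fun x : ℝ => ω*x) ω u := by
    simpa using (hasDerivAt_id u).const_mul ω
  simpa [mul_comm] using h.cos
lemma integral_sinsq (ω : ℝ) (hω : ω ≠ 0) (a b : ℝ) :
    ∫ u in a..b, sin (ω*u)^2
      = (b - a)/2 - (sin (ω*b) * cos (ω*b) - sin (ω*a) * cos (ω*a))/(2*ω) := by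
  have key : ∀ u : ℝ, HasDerivAt (fun x => x/2 - sin (ω*x) * cos (ω*x)/(2*ω))
      (sin (ω*u)^2) u := by
    intro u
    have h1 : HasDerivAt (fun x : ℝ => x/2) (1/2) u := by
      simpa using (hasDerivAt_id u).div_const 2
    have h2 : HasDerivAt (fun x => sin (ω*x) * cos (ω*x))
        (ω * cos (ω*u) * cos (ω*u) + sin (ω*u) * (-(ω * sin (ω*u)))) u :=
      (hasDerivAt_sin_mul ω u).mul (hasDerivAt_cos_mul ω u)
    have := h1.sub (h2.div_const (2*ω))
    refine this.congr_deriv ?_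
    have hs := Real.sin_sq_add_cos_sq (ω*u)
    field_simp
    linear_combination (-1:ℝ)*hs
  rw [intervalIntegral.integral_eq_sub_of_hasDerivAt (fun u _ => key u)
    (Continuous.intervalIntegrable (by continuity) a b)]
  ring

lemma contDiff_deriv_of_two (ψ : ℝ → ℝ) (h : ContDiff ℝ 2 ψ) : ContDiff ℝ 1 (deriv ψ) :=
  ((contDiff_succ_iff_deriv (n := 1)).mp (by exact_mod_cast h)).2.2
lemma ibp (d lam01 α : ℝ) (hd : 0 < d) (ψ₀ : ℝ → ℝ) (hψ₀ : ContDiff ℝ 2 ψ₀)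
    (hψ₀0 : ψ₀ 0 = 0) (hψ₀d : deriv ψ₀ d + α * ψ₀ d = 0)
    (heig : ∀ u ∈ Icc (0:ℝ) d, -(deriv (deriv ψ₀) u) = lam01 * ψ₀ u) :
    ∫ u in (0:ℝ)..d, (deriv ψ₀ u)^2
      = -(α * ψ₀ d ^2) + lam01 * ∫ u in (0:ℝ)..d, ψ₀ u ^2 := by
  have hψd : Differentiable ℝ ψ₀ := hψ₀.differentiable two_ne_zero
  have hdd : ContDiff ℝ 1 (deriv ψ₀) := contDiff_deriv_of_two ψ₀ hψ₀
  have hcont1 : Continuous (deriv ψ₀) := hdd.continuous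
  have hcont2 : Continuous (deriv (deriv ψ₀)) := (contDiff_one_iff_deriv.mp hdd).2
  have key : ∀ u : ℝ, HasDerivAt (fun x => ψ₀ x * deriv ψ₀ x)
      ((deriv ψ₀ u)^2 + ψ₀ u * deriv (deriv ψ₀) u) u := by
    intro u
    have h1 : HasDerivAt ψ₀ (deriv ψ₀ u) u := (hψd u).hasDerivAt
    have h2 : HasDerivAt (deriv ψ₀) (deriv (deriv ψ₀) u) u :=
      ((hdd.differentiable one_ne_zero) u).hasDerivAt
    have := h1.mul h2
    refine this.congr_deriv ?_; ring
  have hInt : ∫ u in (0:ℝ)..d, ((deriv ψ₀ u)^2 + ψ₀ u * deriv (deriv ψ₀) u)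
      = ψ₀ d * deriv ψ₀ d - ψ₀ 0 * deriv ψ₀ 0 := by
    exact intervalIntegral.integral_eq_sub_of_hasDerivAt (fun u _ => key u)
      (Continuous.intervalIntegrable (by fun_prop) 0 d)
  have hcongr : ∫ u in (0:ℝ)..d, ((deriv ψ₀ u)^2 + ψ₀ u * deriv (deriv ψ₀) u)
      = ∫ u in (0:ℝ)..d, ((deriv ψ₀ u)^2 - lam01 * ψ₀ u ^2) := by
    apply intervalIntegral.integral_congr
    intro u hu
    rw [uIcc_of_le hd.le] at hu
    have := heig u hu
    have h2 : deriv (deriv ψ₀) u = -(lam01 * ψ₀ u) := by linarith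
    simp only [h2]; ring
  have hsplit : ∫ u in (0:ℝ)..d, ((deriv ψ₀ u)^2 - lam01 * ψ₀ u ^2)
      = (∫ u in (0:ℝ)..d, (deriv ψ₀ u)^2) - lam01 * ∫ u in (0:ℝ)..d, ψ₀ u ^2 := by
    rw [intervalIntegral.integral_sub (Continuous.intervalIntegrable (by fun_prop) 0 d)
      (Continuous.intervalIntegrable (by fun_prop) 0 d), intervalIntegral.integral_const_mul]
  rw [hcongr, hsplit] at hInt
  have : deriv ψ₀ d = -(α * ψ₀ d) := by linarith
  rw [this, hψ₀0] at hInt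
  nlinarith [hInt]
lemma ode_explicit (d ω : ℝ) (hd : 0 < d) (hω : 0 < ω) (ψ : ℝ → ℝ) (hψ : ContDiff ℝ 2 ψ)
    (h0 : ψ 0 = 0)
    (heig : ∀ u ∈ Icc (0:ℝ) d, deriv (deriv ψ) u = -(ω^2 * ψ u)) :
    ∀ u ∈ Icc (0:ℝ) d, ψ u = (deriv ψ 0 / ω) * sin (ω*u) := by
  obtain ⟨c, hc⟩ : ∃ c : ℝ, c = deriv ψ 0 / ω := ⟨_, rfl⟩
  have hψd : Differentiable ℝ ψ := hψ.differentiable two_ne_zero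
  have hdd : ContDiff ℝ 1 (deriv ψ) := contDiff_deriv_of_two ψ hψ
  have hD : ∀ u, HasDerivAt (fun x => ψ x - c * sin (ω*x))
      (deriv ψ u - c * (ω * cos (ω*u))) u := fun u =>
    ((hψd u).hasDerivAt).sub ((hasDerivAt_sin_mul ω u).const_mul c)
  have hD' : ∀ u, HasDerivAt (fun x => deriv ψ x - c * (ω * cos (ω*x)))
      (deriv (deriv ψ) u + c * (ω^2 * sin (ω*u))) u := by
    intro u
    have h1 : HasDerivAt (deriv ψ) (deriv (deriv ψ) u) u :=
      ((hdd.differentiable one_ne_zero) u).hasDerivAt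
    have h2 : HasDerivAt (fun x => c * (ω * cos (ω*x))) (-(c * (ω^2 * sin (ω*u)))) u := by
      have := ((hasDerivAt_cos_mul ω u).const_mul ω).const_mul c
      refine this.congr_deriv ?_
      ring
    have := h1.sub h2
    refine this.congr_deriv ?_
    ring
  have hED : ∀ u ∈ Icc (0:ℝ) d, HasDerivAt
      (fun u => (deriv ψ u - c * (ω * cos (ω*u)))^2 + ω^2 * (ψ u - c * sin (ω*u))^2) 0 u := by
    intro u hu
    have h1 := ((hD' u).pow 2).add (((hD u).pow 2).const_mul (ω^2))
    have h2 : deriv (deriv ψ) u = -(ω^2 * ψ u) := heig u hu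
    refine h1.congr_deriv ?_
    simp only [Nat.cast_ofNat, Nat.add_one_sub_one, pow_one]
    rw [h2]
    ring
  have hcontE : ContinuousOn
      (fun u => (deriv ψ u - c * (ω * cos (ω*u)))^2 + ω^2 * (ψ u - c * sin (ω*u))^2)
      (Icc (0:ℝ) d) := by
    have c1 : Continuous fun u : ℝ => ω * u := continuous_const.mul continuous_id
    have c2 : Continuous fun u : ℝ => deriv ψ u - c * (ω * cos (ω*u)) :=
      hdd.continuous.sub (continuous_const.mul (continuous_const.mul (Real.continuous_cos.comp c1)))
    have c3 : Continuous fun u : ℝ => ψ u - c * sin (ω*u) :=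
      hψ.continuous.sub (continuous_const.mul (Real.continuous_sin.comp c1))
    exact ((c2.pow 2).add (continuous_const.mul (c3.pow 2))).continuousOn
  have hEconst := constant_of_has_deriv_right_zero hcontE
    (fun x hx => (hED x ⟨hx.1, hx.2.le⟩).hasDerivWithinAt)
  intro u hu
  have hval := hEconst u hu
  have hE0 : (deriv ψ 0 - c * (ω * cos (ω*0)))^2 + ω^2 * (ψ 0 - c * sin (ω*0))^2 = 0 := by
    rw [mul_zero, Real.sin_zero, Real.cos_zero, h0, hc]
    field_simp
    ring
  rw [hE0] at hval
  have h4 : ω^2*(ψ u - c * sin (ω*u))^2 ≤ 0 := by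
    nlinarith [sq_nonneg (deriv ψ u - c * (ω * cos (ω*u)))]
  have h5 : (ψ u - c * sin (ω*u))^2 ≤ 0 := by
    nlinarith [pow_pos hω 2, sq_nonneg (ψ u - c * sin (ω*u))]
  have h2 : ψ u - c * sin (ω*u) = 0 := by
    nlinarith [sq_nonneg (ψ u - c * sin (ω*u))]
  rw [← hc]
  linarith

lemma variational (d ω α : ℝ) (hd : 0 < d) (hω : 0 < ω) (hθπ : ω*d < π)
    (hRobin : ω * cos (ω*d) + α * sin (ω*d) = 0)
    (ψ : ℝ → ℝ) (hψ : ContDiff ℝ 1 ψ) (hψ0 : ψ 0 = 0) :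
    ω^2 * ∫ u in (0:ℝ)..d, ψ u^2 ≤ (∫ u in (0:ℝ)..d, (deriv ψ u)^2) + α * ψ d^2 := by
  have hψd : Differentiable ℝ ψ := hψ.differentiable one_ne_zero
  have hψ' : Continuous (deriv ψ) := (contDiff_one_iff_deriv.mp hψ).2
  have hsind : 0 < sin (ω*d) := Real.sin_pos_of_pos_of_lt_pi (by positivity) hθπ
  -- the logarithmic-derivative weight
  set q : ℝ → ℝ := fun u => ω * cos (ω*u) / sin (ω*u) with hq
  set G : ℝ → ℝ := fun u => q u * ψ u ^ 2 with hG
  set g : ℝ → ℝ := fun u => (deriv ψ u)^2 - ω^2 * ψ u^2 with hg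
  have hgc : Continuous g := by
    exact (hψ'.pow 2).sub (continuous_const.mul ((hψ.continuous).pow 2))
  -- sin (ω u) positive on (0, d]
  have hsin : ∀ u : ℝ, 0 < u → u ≤ d → 0 < sin (ω*u) := by
    intro u h1 h2
    apply Real.sin_pos_of_pos_of_lt_pi (by positivity)
    calc ω*u ≤ ω*d := by nlinarith
    _ < π := hθπ
  -- key inequality for each ε ∈ (0, d]
  have key : ∀ ε : ℝ, 0 < ε → ε ≤ d → -(α * ψ d^2) - G ε ≤ ∫ u in ε..d, g u := by
    intro ε hε hεd
    set W : ℝ → ℝ := fun u =>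
      ((ω * -(ω * sin (ω*u)) * sin (ω*u) - ω * cos (ω*u) * (ω * cos (ω*u))) / (sin (ω*u))^2)
        * ψ u^2 + q u * (2 * ψ u * deriv ψ u) with hW
    have hDG : ∀ u ∈ Set.uIcc ε d, HasDerivAt G (W u) u := by
      intro u hu
      rw [Set.uIcc_of_le hεd] at hu
      have hs : sin (ω*u) ≠ 0 := (hsin u (lt_of_lt_of_le hε hu.1) hu.2).ne'
      have h1 : HasDerivAt q
          ((ω * -(ω * sin (ω*u)) * sin (ω*u) - ω * cos (ω*u) * (ω * cos (ω*u))) / (sin (ω*u))^2) u :=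
        ((hasDerivAt_cos_mul ω u).const_mul ω).div (hasDerivAt_sin_mul ω u) hs
      have h2 : HasDerivAt (fun x => ψ x^2) (2 * ψ u * deriv ψ u) u := by
        have := ((hψd u).hasDerivAt).pow 2
        refine this.congr_deriv ?_
        simp
      exact h1.mul h2
    have hWint : IntervalIntegrable W MeasureTheory.volume ε d := by
      apply ContinuousOn.intervalIntegrable
      rw [Set.uIcc_of_le hεd]
      have hsne : ∀ u ∈ Set.Icc ε d, sin (ω*u) ≠ 0 := fun u hu =>
        (hsin u (lt_of_lt_of_le hε hu.1) hu.2).ne'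
      have c1 : Continuous fun u : ℝ => ω*u := continuous_const.mul continuous_id
      have csin : Continuous fun u : ℝ => sin (ω*u) := Real.continuous_sin.comp c1
      have ccos : Continuous fun u : ℝ => cos (ω*u) := Real.continuous_cos.comp c1
      apply ContinuousOn.add
      · exact (ContinuousOn.div (by fun_prop) ((csin.pow 2).continuousOn)
          (fun u hu => pow_ne_zero 2 (hsne u hu))).mul ((hψ.continuous.pow 2).continuousOn)
      · exact ((ContinuousOn.div (by fun_prop) csin.continuousOn hsne)).mul
          (((continuous_const.mul hψ.continuous).mul hψ').continuousOn)
    have hFTC : ∫ u in ε..d, W u = G d - G ε :=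
      intervalIntegral.integral_eq_sub_of_hasDerivAt hDG hWint
    have hmono : ∫ u in ε..d, W u ≤ ∫ u in ε..d, g u := by
      apply intervalIntegral.integral_mono_on hεd hWint (hgc.intervalIntegrable ε d)
      intro u hu
      have hs : 0 < sin (ω*u) := hsin u (lt_of_lt_of_le hε hu.1) hu.2
      have hpy : sin (ω*u)^2 + cos (ω*u)^2 = 1 := Real.sin_sq_add_cos_sq _
      have hsq : 0 ≤ (deriv ψ u - q u * ψ u)^2 := sq_nonneg _
      have hsne : sin (ω*u) ≠ 0 := hs.ne'
      have hEq : g u - W u = (deriv ψ u - q u * ψ u)^2 := by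
        simp only [hg, hW, hq]
        field_simp
        ring
      linarith [hsq, hEq]
    have hGd : G d = -(α * ψ d^2) := by
      simp only [hG, hq]
      have : ω * cos (ω*d) = -(α * sin (ω*d)) := by linarith
      rw [this]
      field_simp
    rw [hFTC, hGd] at hmono
    linarith
  -- limit as ε → 0⁺
  have hInt0d : ∀ a b : ℝ, IntervalIntegrable g MeasureTheory.volume a b :=
    fun a b => hgc.intervalIntegrable a b
  have hprim : Continuous fun x => ∫ u in (0:ℝ)..x, g u :=
    intervalIntegral.continuous_primitive hInt0d 0
  have hF : ∀ ε : ℝ, (∫ u in ε..d, g u) = (∫ u in (0:ℝ)..d, g u) - ∫ u in (0:ℝ)..ε, g u := by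
    intro ε
    rw [← intervalIntegral.integral_add_adjacent_intervals (hInt0d 0 ε) (hInt0d ε d)]
    ring
  have hFt : Tendsto (fun ε => ∫ u in ε..d, g u) (𝓝[>] (0:ℝ)) (𝓝 (∫ u in (0:ℝ)..d, g u)) := by
    have h1 : Tendsto (fun ε : ℝ => ∫ u in (0:ℝ)..ε, g u) (𝓝 (0:ℝ))
        (𝓝 (∫ u in (0:ℝ)..(0:ℝ), g u)) := hprim.tendsto 0
    rw [intervalIntegral.integral_same] at h1
    have h2 := (tendsto_const_nhds (x := ∫ u in (0:ℝ)..d, g u)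
      (f := 𝓝 (0:ℝ))).sub h1
    rw [sub_zero] at h2
    exact (h2.mono_left nhdsWithin_le_nhds).congr (fun ε => (hF ε).symm)
  have hψt : Tendsto ψ (𝓝[>] (0:ℝ)) (𝓝 0) := by
    have := (hψ.continuous.tendsto 0).mono_left (nhdsWithin_le_nhds (s := Ioi (0:ℝ)))
    rwa [hψ0] at this
  have hslope : Tendsto (fun ε => ψ ε / ε) (𝓝[>] (0:ℝ)) (𝓝 (deriv ψ 0)) := by
    have h := (hψd 0).hasDerivAt
    rw [hasDerivAt_iff_tendsto_slope] at h
    have h2 := h.mono_left (nhdsWithin_mono 0 (fun x hx => ne_of_gt hx))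
    apply h2.congr
    intro ε
    simp [slope_def_field, hψ0]
  have hBt : Tendsto (fun ε => 2 * (ψ ε^2 / ε)) (𝓝[>] (0:ℝ)) (𝓝 0) := by
    have h1 : Tendsto (fun ε => (ψ ε / ε) * ψ ε) (𝓝[>] (0:ℝ)) (𝓝 (deriv ψ 0 * 0)) :=
      hslope.mul hψt
    rw [mul_zero] at h1
    have h2 := h1.const_mul 2
    rw [mul_zero] at h2
    apply h2.congr'
    filter_upwards [self_mem_nhdsWithin] with ε (hε : 0 < ε)
    rw [sq]
    field_simp
  have hGt : Tendsto G (𝓝[>] (0:ℝ)) (𝓝 0) := by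
    apply squeeze_zero_norm' _ hBt
    have hm : 0 < min d (1/ω) := lt_min hd (by positivity)
    filter_upwards [Ioo_mem_nhdsGT_of_mem ⟨le_refl (0:ℝ), hm⟩] with ε hε
    obtain ⟨hε0, hεm⟩ := hε
    have hεd : ε ≤ d := le_of_lt (lt_of_lt_of_le hεm (min_le_left _ _))
    have hωε : ω * ε < 1 := by
      have := lt_of_lt_of_le hεm (min_le_right _ _)
      rw [lt_div_iff₀ hω] at this
      linarith [this]
    have hs : 0 < sin (ω*ε) := hsin ε hε0 hεd
    have hcube : ω*ε - (ω*ε)^3/4 < sin (ω*ε) := by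
      have := Real.sin_gt_sub_cube (x := ω*ε) (by positivity); nlinarith [pow_pos (mul_pos hω hε0) 3]
    have h3 : (ω*ε)^3 ≤ ω*ε := by nlinarith [mul_pos hω hε0, sq_nonneg (ω*ε)]
    have hsin2 : ω * ε ≤ 2 * sin (ω*ε) := by nlinarith [mul_pos hω hε0, h3, hcube]
    have h1 : ‖G ε‖ = |q ε| * ψ ε^2 := by
      simp only [hG, Real.norm_eq_abs, abs_mul, abs_of_nonneg (sq_nonneg (ψ ε))]
    have h2 : |q ε| ≤ 2/ε := by
      simp only [hq]
      rw [abs_div, abs_of_pos hs, div_le_div_iff₀ hs hε0]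
      have hc : |ω * cos (ω*ε)| ≤ ω := by
        rw [abs_mul, abs_of_pos hω]
        nlinarith [abs_cos_le_one (ω*ε), abs_nonneg (cos (ω*ε))]
      nlinarith [hs, hc, abs_nonneg (ω * cos (ω*ε))]
    rw [h1]
    calc |q ε| * ψ ε^2 ≤ (2/ε) * ψ ε^2 := by nlinarith [sq_nonneg (ψ ε)]
    _ = 2 * (ψ ε^2/ε) := by ring
  have hev : ∀ᶠ ε in 𝓝[>] (0:ℝ), -(α * ψ d^2) ≤ (∫ u in ε..d, g u) + G ε := by
    filter_upwards [Ioc_mem_nhdsGT_of_mem ⟨le_refl (0:ℝ), hd⟩] with ε hε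
    have := key ε hε.1 hε.2
    linarith
  have hlim : Tendsto (fun ε => (∫ u in ε..d, g u) + G ε) (𝓝[>] (0:ℝ))
      (𝓝 ((∫ u in (0:ℝ)..d, g u) + 0)) := hFt.add hGt
  have hfinal := ge_of_tendsto hlim hev
  rw [add_zero] at hfinal
  have hsplit : (∫ u in (0:ℝ)..d, g u)
      = (∫ u in (0:ℝ)..d, (deriv ψ u)^2) - ω^2 * ∫ u in (0:ℝ)..d, ψ u^2 := by
    simp only [hg]
    rw [intervalIntegral.integral_sub (f := fun u => deriv ψ u ^ 2) (g := fun u => ω^2 * ψ u^2) ((hψ'.pow 2).intervalIntegrable 0 d)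
      ((continuous_const.mul ((hψ.continuous).pow 2)).intervalIntegrable 0 d),
      intervalIntegral.integral_const_mul]
  rw [hsplit] at hfinal
  linarith

lemma eigmem (d α W : ℝ) (hd : 0 < d) (hWpos : 0 < W) (hWa : π/(2*d) ≤ W)
    (hgW : W * cos (W*d) + α * sin (W*d) = 0) :
    W^2 ∈ {lam : ℝ | ∃ ψ : ℝ → ℝ, ContDiff ℝ 2 ψ ∧
        (∃ u ∈ Icc (0:ℝ) d, ψ u ≠ 0) ∧ ψ 0 = 0 ∧ deriv ψ d + α * ψ d = 0 ∧
        ∀ u ∈ Icc (0:ℝ) d, -(deriv (deriv ψ) u) = lam * ψ u} := by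
  refine ⟨fun u => sin (W*u), ?_, ?_, by simp, ?_, ?_⟩
  · exact (Real.contDiff_sin.of_le le_top).comp
      ((contDiff_const.mul contDiff_id).of_le le_top)
  · refine ⟨π/(2*W), ⟨div_nonneg Real.pi_pos.le (by linarith), ?_⟩, ?_⟩
    · rw [div_le_iff₀ (show (0:ℝ) < 2*W by linarith)]
      rw [div_le_iff₀ (show (0:ℝ) < 2*d by linarith)] at hWa
      nlinarith [hWa]
    · have h1 : W * (π/(2*W)) = π/2 := by
        field_simp
      show sin (W*(π/(2*W))) ≠ 0
      rw [h1, Real.sin_pi_div_two]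
      norm_num
  · have hder : deriv (fun u => sin (W*u)) = fun u => W * cos (W*u) :=
      funext fun u => (hasDerivAt_sin_mul W u).deriv
    rw [hder]
    exact hgW
  · intro u hu
    have hder : deriv (fun u => sin (W*u)) = fun u => W * cos (W*u) :=
      funext fun u => (hasDerivAt_sin_mul W u).deriv
    rw [hder]
    have h2 : deriv (fun u => W * cos (W*u)) u = W * -(W * sin (W*u)) :=
      ((hasDerivAt_cos_mul W u).const_mul W).deriv
    rw [h2]
    ring


set_option maxHeartbeats 1000000 in
lemma spectral_form (d α lam01 : ℝ) (hd : 0 < d) (hα0 : 0 ≤ α)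
    (ψ₀ : ℝ → ℝ) (hψ₀ : ContDiff ℝ 2 ψ₀)
    (hψ₀0 : ψ₀ 0 = 0) (hψ₀d : deriv ψ₀ d + α * ψ₀ d = 0)
    (heig : ∀ u ∈ Icc (0:ℝ) d, -(deriv (deriv ψ₀) u) = lam01 * ψ₀ u)
    (hnorm : 0 < ∫ u in (0:ℝ)..d, (ψ₀ u) ^ 2) :
    ∃ ω c : ℝ, 0 < ω ∧ ω^2 = lam01 ∧ c ≠ 0 ∧
      (∀ u ∈ Icc (0:ℝ) d, ψ₀ u = c * sin (ω*u)) ∧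
      ω * cos (ω*d) + α * sin (ω*d) = 0 ∧ π/2 ≤ ω*d := by
  have hNpos : 0 < ∫ u in (0:ℝ)..d, (ψ₀ u) ^ 2 := hnorm
  have hIBP := ibp d lam01 α hd ψ₀ hψ₀ hψ₀0 hψ₀d heig
  have hInonneg : 0 ≤ ∫ u in (0:ℝ)..d, (deriv ψ₀ u)^2 :=
    intervalIntegral.integral_nonneg hd.le (fun u _ => sq_nonneg _)
  have hdd : ContDiff ℝ 1 (deriv ψ₀) := contDiff_deriv_of_two ψ₀ hψ₀
  have hvanish : ∀ (_ : ∀ u ∈ Icc (0:ℝ) d, ψ₀ u = 0), False := by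
    intro hz
    have hNz : (∫ u in (0:ℝ)..d, (ψ₀ u) ^ 2) = ∫ u in (0:ℝ)..d, (0:ℝ) := by
      apply intervalIntegral.integral_congr
      intro u hu
      rw [uIcc_of_le hd.le] at hu
      simp [hz u hu]
    rw [hNz] at hNpos
    simp at hNpos
  have hlampos : 0 < lam01 := by
    rcases lt_trichotomy lam01 0 with h | h | h
    · nlinarith [sq_nonneg (ψ₀ d)]
    · exfalso
      subst h
      have hz : ∀ u ∈ Icc (0:ℝ) d, deriv (deriv ψ₀) u = 0 := by
        intro u hu; have := heig u hu; linarith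
      set m : ℝ := deriv ψ₀ 0 with hm
      have step1 : ∀ x ∈ Icc (0:ℝ) d, deriv ψ₀ x = m := by
        apply constant_of_has_deriv_right_zero (hdd.continuous.continuousOn)
        intro x hx
        have h1 : HasDerivAt (deriv ψ₀) (deriv (deriv ψ₀) x) x :=
          ((hdd.differentiable one_ne_zero) x).hasDerivAt
        rw [hz x ⟨hx.1, hx.2.le⟩] at h1
        exact h1.hasDerivWithinAt
      have step2 : ∀ x ∈ Icc (0:ℝ) d, ψ₀ x - m * x = ψ₀ 0 - m * 0 := by
        apply constant_of_has_deriv_right_zero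
          ((hψ₀.continuous.sub (continuous_const.mul continuous_id)).continuousOn)
        intro x hx
        have h1 : HasDerivAt (fun y => ψ₀ y - m * y) (deriv ψ₀ x - m) x := by
          exact ((hψ₀.differentiable two_ne_zero x).hasDerivAt).sub
            (by simpa using (hasDerivAt_id x).const_mul m)
        rw [step1 x ⟨hx.1, hx.2.le⟩] at h1
        rw [sub_self] at h1
        exact h1.hasDerivWithinAt
      have hlin : ∀ x ∈ Icc (0:ℝ) d, ψ₀ x = m * x := by
        intro x hx
        have := step2 x hx
        rw [hψ₀0] at this
        linarith
      have hRd : deriv ψ₀ d = m := step1 d ⟨hd.le, le_refl d⟩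
      have hψdval : ψ₀ d = m * d := hlin d ⟨hd.le, le_refl d⟩
      have hm0 : m = 0 := by
        rw [hRd, hψdval] at hψ₀d
        have h2 : m * (1 + α * d) = 0 := by linarith
        have h3 : 0 < 1 + α * d := by nlinarith
        rcases mul_eq_zero.mp h2 with h | h
        · exact h
        · linarith
      exact hvanish (fun u hu => by rw [hlin u hu, hm0, zero_mul])
    · exact h
  obtain ⟨ω, hω⟩ : ∃ x : ℝ, x = Real.sqrt lam01 := ⟨_, rfl⟩
  have hωpos : 0 < ω := by rw [hω]; exact Real.sqrt_pos.mpr hlampos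
  have hω2 : ω^2 = lam01 := by rw [hω]; exact Real.sq_sqrt hlampos.le
  have heig' : ∀ u ∈ Icc (0:ℝ) d, deriv (deriv ψ₀) u = -(ω^2 * ψ₀ u) := by
    intro u hu; have := heig u hu; rw [hω2]; linarith
  have hform := ode_explicit d ω hd hωpos ψ₀ hψ₀ hψ₀0 heig'
  obtain ⟨c, hc⟩ : ∃ x : ℝ, x = deriv ψ₀ 0 / ω := ⟨_, rfl⟩
  rw [← hc] at hform
  have hderivd : deriv ψ₀ d = c * (ω * cos (ω*d)) := by
    have hA : HasDerivWithinAt ψ₀ (deriv ψ₀ d) (Icc (0:ℝ) d) d :=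
      ((hψ₀.differentiable two_ne_zero d).hasDerivAt).hasDerivWithinAt
    have hB : HasDerivWithinAt ψ₀ (c * (ω * cos (ω*d))) (Icc (0:ℝ) d) d := by
      have h1 : HasDerivWithinAt (fun x => c * sin (ω*x)) (c * (ω * cos (ω*d)))
          (Icc (0:ℝ) d) d := ((hasDerivAt_sin_mul ω d).const_mul c).hasDerivWithinAt
      exact h1.congr (fun y hy => hform y hy) (hform d ⟨hd.le, le_refl d⟩)
    have hu : UniqueDiffWithinAt ℝ (Icc (0:ℝ) d) d := (uniqueDiffOn_Icc hd) d ⟨hd.le, le_refl d⟩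
    rw [← hA.derivWithin hu, ← hB.derivWithin hu]
  have hψ₀dval : ψ₀ d = c * sin (ω*d) := hform d ⟨hd.le, le_refl d⟩
  have hcne : c ≠ 0 := by
    intro h0
    exact hvanish (fun u hu => by rw [hform u hu, h0, zero_mul])
  have hRobin : ω * cos (ω*d) + α * sin (ω*d) = 0 := by
    rw [hderivd, hψ₀dval] at hψ₀d
    have h2 : c * (ω * cos (ω*d) + α * sin (ω*d)) = 0 := by linarith
    rcases mul_eq_zero.mp h2 with h | h
    · exact absurd h hcne
    · exact h
  have hθpos : 0 < ω*d := by positivity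
  have hθge : π/2 ≤ ω*d := by
    by_contra hlt
    push_neg at hlt
    have hcos : 0 < cos (ω*d) := Real.cos_pos_of_mem_Ioo ⟨by linarith [Real.pi_pos], hlt⟩
    have hsin : 0 < sin (ω*d) :=
      Real.sin_pos_of_pos_of_lt_pi hθpos (by linarith [Real.pi_pos])
    nlinarith [mul_pos hωpos hcos, mul_nonneg hα0 hsin.le]
  exact ⟨ω, c, hωpos, hω2, hcne, hform, hRobin, hθge⟩

set_option maxHeartbeats 1000000 in
lemma theta_lt_pi (d α lam01 ω : ℝ) (hd : 0 < d) (hα0 : 0 ≤ α)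
    (hleast : IsLeast {lam : ℝ | ∃ ψ : ℝ → ℝ, ContDiff ℝ 2 ψ ∧
        (∃ u ∈ Icc (0:ℝ) d, ψ u ≠ 0) ∧ ψ 0 = 0 ∧ deriv ψ d + α * ψ d = 0 ∧
        ∀ u ∈ Icc (0:ℝ) d, -(deriv (deriv ψ) u) = lam * ψ u} lam01)
    (hωpos : 0 < ω) (hω2 : ω^2 = lam01) : ω*d < π := by
  have hπpos : 0 < π := Real.pi_pos
  set gfun : ℝ → ℝ := fun x => x * cos (x*d) + α * sin (x*d) with hgfun
  have hgc : ContinuousOn gfun (Icc (π/(2*d)) (π/d)) := by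
    apply Continuous.continuousOn
    have c1 : Continuous fun x : ℝ => x*d := continuous_id.mul continuous_const
    exact (continuous_id.mul (Real.continuous_cos.comp c1)).add
      (continuous_const.mul (Real.continuous_sin.comp c1))
  have hab : π/(2*d) ≤ π/d := by
    rw [div_le_div_iff₀ (by positivity) hd]
    nlinarith
  have hga : gfun (π/(2*d)) = α := by
    have h1 : (π/(2*d)) * d = π/2 := by field_simp
    simp only [hgfun, h1, Real.cos_pi_div_two, Real.sin_pi_div_two]
    ring
  have hgb : gfun (π/d) = -(π/d) := by
    have h1 : (π/d) * d = π := by field_simp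
    simp only [hgfun, h1, Real.cos_pi, Real.sin_pi]
    ring
  have hmem : (0:ℝ) ∈ Icc (gfun (π/d)) (gfun (π/(2*d))) := by
    rw [hga, hgb]
    constructor
    · have hpd : 0 < π/d := by positivity
      linarith
    · exact hα0
  obtain ⟨W, hW, hgW⟩ := intermediate_value_Icc' hab hgc hmem
  have hWpos : 0 < W := lt_of_lt_of_le (by positivity) hW.1
  have hWlt : W < π/d := by
    by_contra hcon
    push_neg at hcon
    have hWeq : W = π/d := le_antisymm hW.2 hcon
    rw [hWeq, hgb] at hgW
    have hpd : 0 < π/d := by positivity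
    linarith
  have hgW2 : W * cos (W*d) + α * sin (W*d) = 0 := by
    rw [hgfun] at hgW
    simpa using hgW
  have hmemS := eigmem d α W hd hWpos hW.1 hgW2
  have hle := hleast.2 hmemS
  have hωW : ω ≤ W := by
    rw [← hω2] at hle
    nlinarith
  calc ω * d ≤ W * d := by nlinarith
  _ < π := by rw [lt_div_iff₀ hd] at hWlt; linarith

set_option maxHeartbeats 1000000 in
lemma arith1 (d ω c N : ℝ) (hd : 0 < d) (hωpos : 0 < ω) (hcne : c ≠ 0)
    (hθge : π/2 ≤ ω*d) (hNpos : 0 < N)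
    (hNval : N = c^2 * (d/2 - sin (ω*d) * cos (ω*d)/(2*ω))) :
    π^2/(4*d^2) ≤ ω^2 - (-(c^2 * ω * (sin (ω*d) * cos (ω*d))))/N := by
  have halg := alg_ineq hθge
  rw [Real.sin_two_mul] at halg
  have hmain' : π^2 * (ω*d - sin (ω*d) * cos (ω*d)) ≤ 4*(ω*d)^2*(ω*d + sin (ω*d) * cos (ω*d)) := by
    nlinarith
  have hc2 : 0 < c^2 := by positivity
  have h2N : 2*ω*N = c^2*(ω*d - sin (ω*d) * cos (ω*d)) := by
    rw [hNval]; field_simp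
  rw [sub_eq_add_neg, neg_div, neg_neg]
  have hden : (0:ℝ) < 4*d^2 := by positivity
  rw [add_div' _ _ _ hNpos.ne', div_le_div_iff₀ hden hNpos]
  nlinarith [h2N, mul_le_mul_of_nonneg_left hmain' hc2.le, hωpos, hNpos,
    mul_pos hωpos hd, mul_pos hωpos hNpos]

set_option maxHeartbeats 1000000 in
lemma second_half (d γ α ω : ℝ) (hd : 0 < d) (hγ0 : 0 ≤ γ) (h1dγ : 0 < 1 - d * γ)
    (hωpos : 0 < ω) (hθlt : ω*d < π)
    (hRobin : ω * cos (ω*d) + α * sin (ω*d) = 0) :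
    ω^2 - γ ^ 2 / (4 * (1 - d * γ) ^ 2) ≤ sInf {r : ℝ | ∃ ψ : ℝ → ℝ, ContDiff ℝ 1 ψ ∧ ψ 0 = 0 ∧
        (∫ u in (0:ℝ)..d, (ψ u) ^ 2) = 1 ∧
        r = (∫ u in (0:ℝ)..d,
          ((deriv ψ u) ^ 2 - (γ ^ 2 / (4 * (1 - u * γ) ^ 2)) * (ψ u) ^ 2))
          + α * (ψ d) ^ 2} := by
  apply le_csInf
  · refine ⟨_, fun u => Real.sqrt (3/d^3) * u, ?_, by simp, ?_, rfl⟩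
    · exact contDiff_const.mul contDiff_id
    · have h1 : (∫ u in (0:ℝ)..d, (Real.sqrt (3/d^3) * u)^2)
          = ∫ u in (0:ℝ)..d, (3/d^3) * u^2 := by
        apply intervalIntegral.integral_congr
        intro u _
        show (Real.sqrt (3/d^3) * u)^2 = 3/d^3 * u^2
        rw [mul_pow, Real.sq_sqrt (by positivity : (0:ℝ) ≤ 3/d^3)]
      rw [h1, intervalIntegral.integral_const_mul, integral_pow]
      field_simp
      ring
  · rintro r ⟨ψ, hψC, hψz, hψn, rfl⟩
    have hψ'c : Continuous (deriv ψ) := (contDiff_one_iff_deriv.mp hψC).2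
    have hVψ : IntervalIntegrable
        (fun u => (γ ^ 2 / (4 * (1 - u * γ) ^ 2)) * ψ u ^ 2)
        MeasureTheory.volume 0 d := by
      apply ContinuousOn.intervalIntegrable
      rw [uIcc_of_le hd.le]
      apply ContinuousOn.mul _ ((hψC.continuous.pow 2).continuousOn)
      apply ContinuousOn.div continuousOn_const
      · fun_prop
      · intro u hu
        have hpos : 0 < 1 - u * γ := by
          nlinarith [hu.1, hu.2, mul_le_mul_of_nonneg_right hu.2 hγ0]
        positivity
    have hsplit : (∫ u in (0:ℝ)..d,
        ((deriv ψ u) ^ 2 - (γ ^ 2 / (4 * (1 - u * γ) ^ 2)) * (ψ u) ^ 2))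
        = (∫ u in (0:ℝ)..d, (deriv ψ u)^2)
          - ∫ u in (0:ℝ)..d, (γ ^ 2 / (4 * (1 - u * γ) ^ 2)) * (ψ u) ^ 2 :=
      intervalIntegral.integral_sub ((hψ'c.pow 2).intervalIntegrable 0 d) hVψ
    have hVbound : (∫ u in (0:ℝ)..d, (γ ^ 2 / (4 * (1 - u * γ) ^ 2)) * (ψ u) ^ 2)
        ≤ γ ^ 2 / (4 * (1 - d * γ) ^ 2) := by
      calc (∫ u in (0:ℝ)..d, (γ ^ 2 / (4 * (1 - u * γ) ^ 2)) * (ψ u) ^ 2)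
          ≤ ∫ u in (0:ℝ)..d, (γ ^ 2 / (4 * (1 - d * γ) ^ 2)) * (ψ u) ^ 2 := by
            apply intervalIntegral.integral_mono_on hd.le hVψ
              ((continuous_const.mul (hψC.continuous.pow 2)).intervalIntegrable 0 d)
            intro u hu
            have huγ : 0 < 1 - u * γ := by
              nlinarith [hu.1, hu.2, mul_le_mul_of_nonneg_right hu.2 hγ0]
            have hVle : γ ^ 2 / (4 * (1 - u * γ) ^ 2) ≤ γ ^ 2 / (4 * (1 - d * γ) ^ 2) := by
              rw [div_le_div_iff₀ (by positivity) (by positivity)]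
              have h5 : 1 - d*γ ≤ 1 - u*γ := by
                nlinarith [mul_le_mul_of_nonneg_right hu.2 hγ0]
              have h6 : (1-d*γ)^2 ≤ (1-u*γ)^2 := by nlinarith [h1dγ]
              nlinarith [h6, sq_nonneg γ]
            show γ ^ 2 / (4 * (1 - u * γ) ^ 2) * ψ u ^ 2 ≤ γ ^ 2 / (4 * (1 - d * γ) ^ 2) * ψ u ^ 2
            nlinarith [sq_nonneg (ψ u), hVle]
      _ = γ ^ 2 / (4 * (1 - d * γ) ^ 2) := by
            rw [intervalIntegral.integral_const_mul, hψn, mul_one]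
    have hvar := variational d ω α hd hωpos hθlt hRobin ψ hψC hψz
    rw [hψn, mul_one] at hvar
    rw [hsplit]
    linarith

set_option maxHeartbeats 1000000 in
theorem stmt15 (d γ α lam0 lam01 : ℝ) (hd : 0 < d) (hγ0 : 0 ≤ γ) (hγd : γ < 1 / d)
    (hα : α = γ / (2 * (1 - d * γ)))
    -- `λ₀` is the infimum of the Rayleigh quotient of `h̃`
    (hlam0 : lam0 = sInf {r : ℝ | ∃ ψ : ℝ → ℝ, ContDiff ℝ 1 ψ ∧ ψ 0 = 0 ∧
        (∫ u in (0:ℝ)..d, (ψ u) ^ 2) = 1 ∧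
        r = (∫ u in (0:ℝ)..d,
          ((deriv ψ u) ^ 2 - (γ ^ 2 / (4 * (1 - u * γ) ^ 2)) * (ψ u) ^ 2))
          + α * (ψ d) ^ 2})
    -- `λ_{0,1}` is the lowest eigenvalue of the free operator, with eigenfunction `ψ₀`
    (ψ₀ : ℝ → ℝ) (hψ₀ : ContDiff ℝ 2 ψ₀)
    (hψ₀0 : ψ₀ 0 = 0) (hψ₀d : deriv ψ₀ d + α * ψ₀ d = 0)
    (heig : ∀ u ∈ Icc (0:ℝ) d, -(deriv (deriv ψ₀) u) = lam01 * ψ₀ u)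
    (hnorm : 0 < ∫ u in (0:ℝ)..d, (ψ₀ u) ^ 2)
    (hleast : IsLeast {lam : ℝ | ∃ ψ : ℝ → ℝ, ContDiff ℝ 2 ψ ∧
        (∃ u ∈ Icc (0:ℝ) d, ψ u ≠ 0) ∧ ψ 0 = 0 ∧ deriv ψ d + α * ψ d = 0 ∧
        ∀ u ∈ Icc (0:ℝ) d, -(deriv (deriv ψ) u) = lam * ψ u} lam01) :
    π ^ 2 / (4 * d ^ 2)
      ≤ lam01 - α * (ψ₀ d) ^ 2 / (∫ u in (0:ℝ)..d, (ψ₀ u) ^ 2) ∧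
    lam01 - α * (ψ₀ d) ^ 2 / (∫ u in (0:ℝ)..d, (ψ₀ u) ^ 2)
      ≤ lam0 - α * (ψ₀ d) ^ 2 / (∫ u in (0:ℝ)..d, (ψ₀ u) ^ 2)
        + γ ^ 2 / (4 * (1 - d * γ) ^ 2) := by
  have h1dγ : 0 < 1 - d * γ := by
    rw [lt_div_iff₀ hd] at hγd; nlinarith
  have hα0 : 0 ≤ α := by rw [hα]; positivity
  obtain ⟨ω, c, hωpos, hω2, hcne, hform, hRobin, hθge⟩ :=
    spectral_form d α lam01 hd hα0 ψ₀ hψ₀ hψ₀0 hψ₀d heig hnorm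
  have hθlt : ω*d < π := theta_lt_pi d α lam01 ω hd hα0 hleast hωpos hω2
  have hNval : (∫ u in (0:ℝ)..d, (ψ₀ u) ^ 2)
      = c^2 * (d/2 - sin (ω*d) * cos (ω*d)/(2*ω)) := by
    have h1 : (∫ u in (0:ℝ)..d, (ψ₀ u) ^ 2) = ∫ u in (0:ℝ)..d, c^2 * sin (ω*u)^2 := by
      apply intervalIntegral.integral_congr
      intro u hu
      rw [uIcc_of_le hd.le] at hu
      show (ψ₀ u) ^ 2 = c^2 * sin (ω*u)^2
      rw [hform u hu]
      ring
    rw [h1, intervalIntegral.integral_const_mul, integral_sinsq ω hωpos.ne']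
    rw [mul_zero, Real.sin_zero, Real.cos_zero]
    ring
  have hψ₀dval : ψ₀ d = c * sin (ω*d) := hform d ⟨hd.le, le_refl d⟩
  have hbdry : α * ψ₀ d ^ 2 = -(c^2 * ω * (sin (ω*d) * cos (ω*d))) := by
    rw [hψ₀dval]
    have h1 : α * sin (ω*d) = -(ω * cos (ω*d)) := by linarith
    linear_combination (c^2 * sin (ω*d)) * h1
  have hfirst := arith1 d ω c _ hd hωpos hcne hθge hnorm hNval
  rw [← hbdry, hω2] at hfirst
  refine ⟨hfirst, ?_⟩
  have hsecond := second_half d γ α ω hd hγ0 h1dγ hωpos hθlt hRobin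
  rw [← hlam0, hω2] at hsecond
  have hV : 0 ≤ γ ^ 2 / (4 * (1 - d * γ) ^ 2) := by positivity
  linarith
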